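/- arXiv:2407.20914 — 2 statements merged into one kernel-verified Lean document; each statement's English description precedes it below -/
import Mathlib

section
/- Suppose the real penalty parameter satisfies λ > max_{1≤u≤U} L_u. Then every local maximizer x* of f_0 over the relaxed feasible set A — i.e., every x* ∈ A for which there exists ε > 0 such that f_0(x) ≤ f_0(x*) for all x ∈ A with ‖x − x*‖₂ < ε — satisfies x*_n ∈ frontier(conv(𝒳)) (the topological boundary of conv(𝒳) in ℂ) for every n = 1,…,N. In particular, the same holds for every global maximizer of f_0 over A. -/
open Complex Finset

noncomputable section

/-- The set of `K`-th roots of unity in `ℂ`. -/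
def rootsSet (K : ℕ) : Set ℂ :=
  {z : ℂ | ∃ k : ℕ, k < K ∧ z = Complex.exp ((2 * Real.pi * k / K : ℝ) * Complex.I)}

/-- The convex hull (over `ℝ`) of the `K`-th roots of unity. -/
def hullSet (K : ℕ) : Set ℂ := convexHull ℝ (rootsSet K)

/-- The relaxed feasible set `A`. -/
def feasA (K N : ℕ) : Set (Fin (N + 1) → ℂ) :=
  {x | x 0 = 1 ∧ ∀ n : Fin (N + 1), n ≠ 0 → x n ∈ hullSet K}

/-- The discrete feasible set `D`. -/
def feasD (K N : ℕ) : Set (Fin (N + 1) → ℂ) :=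
  {x | x 0 = 1 ∧ ∀ n : Fin (N + 1), n ≠ 0 → x n ∈ rootsSet K}

/-- The ℓ1 norm of a complex vector. -/
def norm1 {N : ℕ} (x : Fin (N + 1) → ℂ) : ℝ := ∑ n, ‖x n‖

/-- The ℓ2 norm of a complex vector. -/
def norm2 {N : ℕ} (x : Fin (N + 1) → ℂ) : ℝ := Real.sqrt (∑ n, ‖x n‖ ^ 2)

/-- The (real) quadratic form `x^H C x`. -/
def quadForm {N : ℕ} (C : Matrix (Fin (N + 1)) (Fin (N + 1)) ℂ)
    (x : Fin (N + 1) → ℂ) : ℝ :=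
  (dotProduct (star x) (Matrix.mulVec C x)).re

/-- The Frobenius norm of a complex matrix. -/
def frobNorm {N : ℕ} (M : Matrix (Fin (N + 1)) (Fin (N + 1)) ℂ) : ℝ :=
  Real.sqrt (∑ i, ∑ j, ‖M i j‖ ^ 2)

/-- The SINR-type objective `f_u`. -/
def fObj {N U : ℕ} (C : Fin U → Fin U → Matrix (Fin (N + 1)) (Fin (N + 1)) ℂ)
    (σ : Fin U → ℝ) (u : Fin U) (x : Fin (N + 1) → ℂ) : ℝ :=
  quadForm (C u u) x /
    ((∑ u' ∈ Finset.univ.erase u, quadForm (C u u') x) + σ u ^ 2)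

/-- The Lipschitz constant `L_u`. -/
def Lconst {N U : ℕ} (C : Fin U → Fin U → Matrix (Fin (N + 1)) (Fin (N + 1)) ℂ)
    (σ : Fin U → ℝ) (u : Fin U) : ℝ :=
  2 * Real.sqrt ((N : ℝ) + 1) * frobNorm (C u u) / σ u ^ 2 *
    (1 + ((N : ℝ) + 1) * frobNorm (∑ u' ∈ Finset.univ.erase u, C u u') / σ u ^ 2)

/-- The minimum of the `f_u` over all users. -/
def minObj {N U : ℕ} (C : Fin U → Fin U → Matrix (Fin (N + 1)) (Fin (N + 1)) ℂ)
    (σ : Fin U → ℝ) (x : Fin (N + 1) → ℂ) : ℝ :=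
  ⨅ u : Fin U, fObj C σ u x

/-- The penalized objective `f_0`. -/
def f0 {N U : ℕ} (C : Fin U → Fin U → Matrix (Fin (N + 1)) (Fin (N + 1)) ℂ)
    (σ : Fin U → ℝ) (lam : ℝ) (x : Fin (N + 1) → ℂ) : ℝ :=
  minObj C σ x + lam * norm1 x


/-! ### Auxiliary lemmas -/

lemma my_norm2_nonneg {N : ℕ} (x : Fin (N + 1) → ℂ) : 0 ≤ norm2 x := Real.sqrt_nonneg _

lemma my_frob_nonneg {N : ℕ} (M : Matrix (Fin (N + 1)) (Fin (N + 1)) ℂ) : 0 ≤ frobNorm M :=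
  Real.sqrt_nonneg _

lemma my_bilin_bound {N : ℕ} (M : Matrix (Fin (N + 1)) (Fin (N + 1)) ℂ)
    (x z : Fin (N + 1) → ℂ) :
    ‖dotProduct (star x) (M.mulVec z)‖ ≤ frobNorm M * (norm2 x * norm2 z) := by
  have h1 : ‖dotProduct (star x) (M.mulVec z)‖ ≤
      ∑ i, ‖x i‖ * ‖(M.mulVec z) i‖ := by
    refine le_trans (norm_sum_le _ _) ?_
    refine Finset.sum_le_sum fun i _ => ?_
    simp [map_mul]
  have hrow : ∀ i, ‖(M.mulVec z) i‖ ≤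
      Real.sqrt (∑ j, ‖M i j‖ ^ 2) * norm2 z := by
    intro i
    calc ‖(M.mulVec z) i‖ = ‖∑ j, M i j * z j‖ := by
          simp [Matrix.mulVec, dotProduct]
      _ ≤ ∑ j, ‖M i j * z j‖ := norm_sum_le _ _
      _ = ∑ j, ‖M i j‖ * ‖z j‖ := by simp [map_mul]
      _ ≤ Real.sqrt (∑ j, ‖M i j‖ ^ 2) * norm2 z :=
          Real.sum_mul_le_sqrt_mul_sqrt _ _ _
  have h2 : ∑ i, ‖x i‖ * ‖(M.mulVec z) i‖ ≤
      norm2 x * Real.sqrt (∑ i, ‖(M.mulVec z) i‖ ^ 2) :=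
    Real.sum_mul_le_sqrt_mul_sqrt _ _ _
  have h3 : Real.sqrt (∑ i, ‖(M.mulVec z) i‖ ^ 2) ≤ frobNorm M * norm2 z := by
    have hle : ∑ i, ‖(M.mulVec z) i‖ ^ 2 ≤
        (∑ i, ∑ j, ‖M i j‖ ^ 2) * (norm2 z) ^ 2 := by
      rw [Finset.sum_mul]
      refine Finset.sum_le_sum fun i _ => ?_
      have h := pow_le_pow_left₀ (norm_nonneg _) (hrow i) 2
      rwa [mul_pow, Real.sq_sqrt (by positivity)] at h
    calc Real.sqrt (∑ i, ‖(M.mulVec z) i‖ ^ 2)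
        ≤ Real.sqrt ((∑ i, ∑ j, ‖M i j‖ ^ 2) * (norm2 z) ^ 2) :=
          Real.sqrt_le_sqrt hle
      _ = frobNorm M * norm2 z := by
          rw [Real.sqrt_mul (by positivity), Real.sqrt_sq (my_norm2_nonneg z)]; rfl
  calc ‖dotProduct (star x) (M.mulVec z)‖
      ≤ norm2 x * Real.sqrt (∑ i, ‖(M.mulVec z) i‖ ^ 2) := h1.trans h2
    _ ≤ norm2 x * (frobNorm M * norm2 z) :=
        mul_le_mul_of_nonneg_left h3 (my_norm2_nonneg x)
    _ = frobNorm M * (norm2 x * norm2 z) := by ring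

lemma my_quad_nonneg {N : ℕ} (a x : Fin (N + 1) → ℂ) :
    0 ≤ quadForm (Matrix.vecMulVec a (star a)) x := by
  have key : dotProduct (star x) ((Matrix.vecMulVec a (star a)).mulVec x)
      = (starRingEnd ℂ) (∑ j, (starRingEnd ℂ) (a j) * x j) * (∑ j, (starRingEnd ℂ) (a j) * x j) := by
    simp only [dotProduct, Matrix.mulVec, Matrix.vecMulVec_apply, Pi.star_apply,
      map_sum, map_mul, RingHom.map_mul]
    rw [Finset.sum_mul]
    congr 1
    ext i
    rw [Finset.mul_sum, Finset.mul_sum]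
    congr 1
    ext j
    simp [Complex.star_def]
    ring
  unfold quadForm
  rw [key]
  set z := ∑ j, (starRingEnd ℂ) (a j) * x j with hz
  have hzz : (starRingEnd ℂ) z * z = (Complex.normSq z : ℂ) := by
    rw [mul_comm, Complex.mul_conj]
  rw [hzz]
  simpa using Complex.normSq_nonneg z

lemma my_quad_sum {N U : ℕ} (s : Finset (Fin U)) (M : Fin U → Matrix (Fin (N + 1)) (Fin (N + 1)) ℂ)
    (x : Fin (N + 1) → ℂ) :
    quadForm (∑ u ∈ s, M u) x = ∑ u ∈ s, quadForm (M u) x := by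
  unfold quadForm
  have hmv : (∑ u ∈ s, M u).mulVec x = ∑ u ∈ s, (M u).mulVec x := by
    ext i
    simp [Matrix.mulVec, dotProduct, Matrix.sum_apply, Finset.sum_mul]
    rw [Finset.sum_comm]
  rw [hmv]
  simp only [dotProduct, Finset.sum_apply, Finset.mul_sum]
  rw [Finset.sum_comm, Complex.re_sum]

lemma my_quad_abs_le {N : ℕ} (M : Matrix (Fin (N + 1)) (Fin (N + 1)) ℂ) (x : Fin (N + 1) → ℂ) :
    |quadForm M x| ≤ frobNorm M * (norm2 x * norm2 x) :=
  le_trans (Complex.abs_re_le_norm _) (my_bilin_bound M x x)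

lemma my_quad_diff {N : ℕ} (M : Matrix (Fin (N + 1)) (Fin (N + 1)) ℂ) (x y : Fin (N + 1) → ℂ) :
    |quadForm M x - quadForm M y| ≤ frobNorm M * (norm2 x + norm2 y) * norm2 (x - y) := by
  have key : dotProduct (star x) (M.mulVec x) - dotProduct (star y) (M.mulVec y)
      = dotProduct (star x) (M.mulVec (x - y))
        + dotProduct (star (x - y)) (M.mulVec y) := by
    rw [Matrix.mulVec_sub, dotProduct_sub, star_sub, sub_dotProduct]
    ring
  have h1 : quadForm M x - quadForm M y
      = (dotProduct (star x) (M.mulVec (x - y))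
        + dotProduct (star (x - y)) (M.mulVec y)).re := by
    unfold quadForm; rw [← Complex.sub_re, key]
  rw [h1]
  calc |(dotProduct (star x) (M.mulVec (x - y))
        + dotProduct (star (x - y)) (M.mulVec y)).re|
      ≤ ‖dotProduct (star x) (M.mulVec (x - y))
        + dotProduct (star (x - y)) (M.mulVec y)‖ := Complex.abs_re_le_norm _
    _ ≤ ‖dotProduct (star x) (M.mulVec (x - y))‖
        + ‖dotProduct (star (x - y)) (M.mulVec y)‖ := norm_add_le _ _
    _ ≤ frobNorm M * (norm2 x * norm2 (x - y)) + frobNorm M * (norm2 (x - y) * norm2 y) :=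
        add_le_add (my_bilin_bound M x (x - y)) (my_bilin_bound M (x - y) y)
    _ = frobNorm M * (norm2 x + norm2 y) * norm2 (x - y) := by ring

lemma my_ratio_bound (qx qy Dx Dy A F1 F2 r sn : ℝ)
    (hA : 0 < A) (hDx : A ≤ Dx) (hDy : A ≤ Dy)
    (hqy0 : 0 ≤ qy) (hqyle : qy ≤ F1 * (sn * sn))
    (hdq : |qx - qy| ≤ 2 * sn * F1 * r)
    (hdD : |Dx - Dy| ≤ 2 * sn * F2 * r)
    (hF1 : 0 ≤ F1) (hsn : 0 ≤ sn) :
    qx / Dx - qy / Dy ≤ 2 * sn * F1 / A * (1 + sn * sn * F2 / A) * r := by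
  have hDx0 : 0 < Dx := lt_of_lt_of_le hA hDx
  have hDy0 : 0 < Dy := lt_of_lt_of_le hA hDy
  have heq : qx / Dx - qy / Dy = (qx - qy) / Dx + qy * (Dy - Dx) / (Dx * Dy) := by
    field_simp
    ring
  have t1 : (qx - qy) / Dx ≤ 2 * sn * F1 * r / A := by
    calc (qx - qy) / Dx ≤ |qx - qy| / Dx :=
          div_le_div_of_nonneg_right (le_abs_self _) hDx0.le |>.trans_eq rfl
      _ ≤ |qx - qy| / A := div_le_div_of_nonneg_left (abs_nonneg _) hA hDx
      _ ≤ 2 * sn * F1 * r / A := div_le_div_of_nonneg_right hdq hA.le |>.trans_eq rfl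
  have t2 : qy * (Dy - Dx) / (Dx * Dy) ≤ F1 * (sn * sn) * (2 * sn * F2 * r) / (A * A) := by
    calc qy * (Dy - Dx) / (Dx * Dy) ≤ qy * |Dy - Dx| / (Dx * Dy) :=
          div_le_div_of_nonneg_right (mul_le_mul_of_nonneg_left (le_abs_self _) hqy0)
            (by positivity)
      _ ≤ qy * |Dy - Dx| / (A * A) :=
          div_le_div_of_nonneg_left (by positivity) (by positivity)
            (mul_le_mul hDx hDy (le_of_lt hA) (le_of_lt hDx0))
      _ ≤ F1 * (sn * sn) * (2 * sn * F2 * r) / (A * A) := by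
          refine div_le_div_of_nonneg_right ?_ (by positivity)
          rw [abs_sub_comm] at hdD
          exact mul_le_mul hqyle hdD (abs_nonneg _) (by positivity)
  rw [heq]
  calc (qx - qy) / Dx + qy * (Dy - Dx) / (Dx * Dy)
      ≤ 2 * sn * F1 * r / A + F1 * (sn * sn) * (2 * sn * F2 * r) / (A * A) := add_le_add t1 t2
    _ = 2 * sn * F1 / A * (1 + sn * sn * F2 / A) * r := by
        field_simp

lemma my_fObj_nonneg {N U : ℕ} (C : Fin U → Fin U → Matrix (Fin (N + 1)) (Fin (N + 1)) ℂ)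
    (a : Fin U → Fin U → (Fin (N + 1) → ℂ))
    (hC : ∀ u u' : Fin U, C u u' = Matrix.vecMulVec (a u u') (star (a u u')))
    (σ : Fin U → ℝ) (hσ : ∀ u, 0 < σ u) (u : Fin U) (x : Fin (N + 1) → ℂ) :
    0 ≤ fObj C σ u x := by
  unfold fObj
  have hnum : 0 ≤ quadForm (C u u) x := by rw [hC]; exact my_quad_nonneg _ _
  have hden : 0 < (∑ u' ∈ Finset.univ.erase u, quadForm (C u u') x) + σ u ^ 2 := by
    have hs : 0 ≤ ∑ u' ∈ Finset.univ.erase u, quadForm (C u u') x :=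
      Finset.sum_nonneg fun u' _ => by rw [hC]; exact my_quad_nonneg _ _
    have hs2 : (0:ℝ) < σ u ^ 2 := pow_pos (hσ u) 2
    linarith
  exact div_nonneg hnum hden.le

lemma my_denom_lb {N U : ℕ} (C : Fin U → Fin U → Matrix (Fin (N + 1)) (Fin (N + 1)) ℂ)
    (a : Fin U → Fin U → (Fin (N + 1) → ℂ))
    (hC : ∀ u u' : Fin U, C u u' = Matrix.vecMulVec (a u u') (star (a u u')))
    (σ : Fin U → ℝ) (u : Fin U) (x : Fin (N + 1) → ℂ) :
    σ u ^ 2 ≤ (∑ u' ∈ Finset.univ.erase u, quadForm (C u u') x) + σ u ^ 2 := by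
  have hs : 0 ≤ ∑ u' ∈ Finset.univ.erase u, quadForm (C u u') x :=
    Finset.sum_nonneg fun u' _ => by rw [hC]; exact my_quad_nonneg _ _
  linarith

lemma my_fObj_lip {N U : ℕ} (C : Fin U → Fin U → Matrix (Fin (N + 1)) (Fin (N + 1)) ℂ)
    (a : Fin U → Fin U → (Fin (N + 1) → ℂ))
    (hC : ∀ u u' : Fin U, C u u' = Matrix.vecMulVec (a u u') (star (a u u')))
    (σ : Fin U → ℝ) (hσ : ∀ u, 0 < σ u) (u : Fin U) (x y : Fin (N + 1) → ℂ)
    (hx : norm2 x ≤ Real.sqrt ((N : ℝ) + 1)) (hy : norm2 y ≤ Real.sqrt ((N : ℝ) + 1)) :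
    fObj C σ u x - fObj C σ u y ≤ Lconst C σ u * norm2 (x - y) := by
  set sn := Real.sqrt ((N : ℝ) + 1) with hsn_def
  have hsn : 0 ≤ sn := Real.sqrt_nonneg _
  have hsn2 : sn * sn = (N : ℝ) + 1 := Real.mul_self_sqrt (by positivity)
  set F1 := frobNorm (C u u) with hF1_def
  set F2 := frobNorm (∑ u' ∈ Finset.univ.erase u, C u u') with hF2_def
  have hF1 : 0 ≤ F1 := my_frob_nonneg _
  have hA : (0 : ℝ) < σ u ^ 2 := pow_pos (hσ u) 2
  set r := norm2 (x - y) with hr_def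
  have hr : 0 ≤ r := my_norm2_nonneg _
  have hsum_x : (∑ u' ∈ Finset.univ.erase u, quadForm (C u u') x)
      = quadForm (∑ u' ∈ Finset.univ.erase u, C u u') x := (my_quad_sum _ _ _).symm
  have hsum_y : (∑ u' ∈ Finset.univ.erase u, quadForm (C u u') y)
      = quadForm (∑ u' ∈ Finset.univ.erase u, C u u') y := (my_quad_sum _ _ _).symm
  have hqy0 : 0 ≤ quadForm (C u u) y := by rw [hC]; exact my_quad_nonneg _ _
  have hqyle : quadForm (C u u) y ≤ F1 * (sn * sn) := by
    have h1 := my_quad_abs_le (C u u) y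
    have h2 : norm2 y * norm2 y ≤ sn * sn :=
      mul_le_mul hy hy (my_norm2_nonneg _) hsn
    calc quadForm (C u u) y ≤ |quadForm (C u u) y| := le_abs_self _
      _ ≤ F1 * (norm2 y * norm2 y) := h1
      _ ≤ F1 * (sn * sn) := mul_le_mul_of_nonneg_left h2 hF1
  have hdq : |quadForm (C u u) x - quadForm (C u u) y| ≤ 2 * sn * F1 * r := by
    calc |quadForm (C u u) x - quadForm (C u u) y|
        ≤ F1 * (norm2 x + norm2 y) * r := my_quad_diff _ _ _
      _ ≤ F1 * (sn + sn) * r :=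
          mul_le_mul_of_nonneg_right
            (mul_le_mul_of_nonneg_left (add_le_add hx hy) hF1) hr
      _ = 2 * sn * F1 * r := by ring
  have hdD : |((∑ u' ∈ Finset.univ.erase u, quadForm (C u u') x) + σ u ^ 2)
      - ((∑ u' ∈ Finset.univ.erase u, quadForm (C u u') y) + σ u ^ 2)| ≤ 2 * sn * F2 * r := by
    rw [hsum_x, hsum_y]
    have : quadForm (∑ u' ∈ Finset.univ.erase u, C u u') x + σ u ^ 2
        - (quadForm (∑ u' ∈ Finset.univ.erase u, C u u') y + σ u ^ 2)
        = quadForm (∑ u' ∈ Finset.univ.erase u, C u u') x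
        - quadForm (∑ u' ∈ Finset.univ.erase u, C u u') y := by ring
    rw [this]
    have hF2 : 0 ≤ F2 := my_frob_nonneg _
    calc |quadForm (∑ u' ∈ Finset.univ.erase u, C u u') x
        - quadForm (∑ u' ∈ Finset.univ.erase u, C u u') y|
        ≤ F2 * (norm2 x + norm2 y) * r := my_quad_diff _ _ _
      _ ≤ F2 * (sn + sn) * r :=
          mul_le_mul_of_nonneg_right
            (mul_le_mul_of_nonneg_left (add_le_add hx hy) hF2) hr
      _ = 2 * sn * F2 * r := by ring
  have key := my_ratio_bound (quadForm (C u u) x) (quadForm (C u u) y)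
    ((∑ u' ∈ Finset.univ.erase u, quadForm (C u u') x) + σ u ^ 2)
    ((∑ u' ∈ Finset.univ.erase u, quadForm (C u u') y) + σ u ^ 2)
    (σ u ^ 2) F1 F2 r sn hA
    (my_denom_lb C a hC σ u x) (my_denom_lb C a hC σ u y)
    hqy0 hqyle hdq hdD hF1 hsn
  unfold fObj Lconst
  refine le_trans key (le_of_eq ?_)
  rw [hsn2, hsn_def]

lemma my_hull_abs_le {K : ℕ} {w : ℂ} (hw : w ∈ hullSet K) : ‖w‖ ≤ 1 := by
  have hsub : rootsSet K ⊆ Metric.closedBall (0 : ℂ) 1 := by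
    rintro z ⟨k, _, rfl⟩
    rw [Metric.mem_closedBall, dist_zero_right]
    rw [Complex.norm_exp_ofReal_mul_I]
  have : hullSet K ⊆ Metric.closedBall (0 : ℂ) 1 :=
    convexHull_min hsub (convex_closedBall _ _)
  have hmem := this hw
  rwa [Metric.mem_closedBall, dist_zero_right] at hmem

lemma my_feas_abs_le {K N : ℕ} {x : Fin (N + 1) → ℂ} (hx : x ∈ feasA K N) (m : Fin (N + 1)) :
    ‖x m‖ ≤ 1 := by
  by_cases hm : m = 0
  · rw [hm, hx.1]; simp
  · exact my_hull_abs_le (hx.2 m hm)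

lemma my_feas_norm2_le {K N : ℕ} {x : Fin (N + 1) → ℂ} (hx : x ∈ feasA K N) :
    norm2 x ≤ Real.sqrt ((N : ℝ) + 1) := by
  unfold norm2
  refine Real.sqrt_le_sqrt ?_
  calc ∑ m, ‖x m‖ ^ 2 ≤ ∑ _m : Fin (N + 1), (1 : ℝ) := by
        refine Finset.sum_le_sum fun m _ => ?_
        have h := my_feas_abs_le hx m
        nlinarith [norm_nonneg (x m)]
    _ = (N : ℝ) + 1 := by simp
  
lemma my_norm2_sub_comm {N : ℕ} (x y : Fin (N + 1) → ℂ) : norm2 (x - y) = norm2 (y - x) := by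
  unfold norm2
  congr 1
  refine Finset.sum_congr rfl fun m _ => ?_
  rw [Pi.sub_apply, Pi.sub_apply, norm_sub_rev]

theorem stmt3
    (K N U : ℕ) (hK : 2 ≤ K) (hN : 1 ≤ N) (hU : 1 ≤ U)
    (a : Fin U → Fin U → (Fin (N + 1) → ℂ))
    (C : Fin U → Fin U → Matrix (Fin (N + 1)) (Fin (N + 1)) ℂ)
    (hC : ∀ u u' : Fin U, C u u' = Matrix.vecMulVec (a u u') (star (a u u')))
    (σ : Fin U → ℝ) (hσ : ∀ u, 0 < σ u)
    (lam : ℝ) (hlam : (⨆ u, Lconst C σ u) < lam)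
    (xstar : Fin (N + 1) → ℂ) (hxA : xstar ∈ feasA K N)
    (hopt : ∃ ε > (0 : ℝ), ∀ x ∈ feasA K N,
      norm2 (x - xstar) < ε → f0 C σ lam x ≤ f0 C σ lam xstar) :
    ∀ n : Fin (N + 1), n ≠ 0 → xstar n ∈ frontier (hullSet K) := by
  intro n hn
  by_contra hfront
  have hmem : xstar n ∈ hullSet K := hxA.2 n hn
  have hint : xstar n ∈ interior (hullSet K) := by
    by_contra hni
    exact hfront ⟨subset_closure hmem, hni⟩
  obtain ⟨δ, hδ0, hball⟩ := Metric.isOpen_iff.mp isOpen_interior _ hint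
  obtain ⟨ε, hε0, hloc⟩ := hopt
  set z : ℂ := xstar n with hz_def
  set d : ℂ := if z = 0 then 1 else z / ((‖z‖ : ℝ) : ℂ) with hd_def
  set t : ℝ := min (δ / 2) (ε / 2) with ht_def
  have ht0 : 0 < t := lt_min (by linarith) (by linarith)
  have htδ : t < δ := lt_of_le_of_lt (min_le_left _ _) (by linarith)
  have htε : t < ε := lt_of_le_of_lt (min_le_right _ _) (by linarith)
  have hd1 : ‖d‖ = 1 := by
    by_cases hz : z = 0
    · simp [hd_def, hz]
    · have habs0 : ‖z‖ ≠ 0 := norm_ne_zero_iff.mpr hz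
      rw [hd_def, if_neg hz, norm_div, Complex.norm_real, Real.norm_eq_abs,
        _root_.abs_of_nonneg (norm_nonneg z), div_self habs0]
  have hfactor : z + (t : ℂ) * d = ((‖z‖ + t : ℝ) : ℂ) * d := by
    by_cases hz : z = 0
    · rw [hd_def, if_pos hz, hz]
      push_cast
      simp [hz]
    · have habs0 : ((‖z‖ : ℝ) : ℂ) ≠ 0 := by
        simpa using norm_ne_zero_iff.mpr hz
      rw [hd_def, if_neg hz]
      push_cast
      field_simp
  have habs : ‖z + (t : ℂ) * d‖ = ‖z‖ + t := by
    rw [hfactor, norm_mul, hd1, mul_one, Complex.norm_real, Real.norm_eq_abs,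
      _root_.abs_of_nonneg (by positivity)]
  set xt : Fin (N + 1) → ℂ := Function.update xstar n (z + (t : ℂ) * d) with hxt_def
  have hxtn : xt n = z + (t : ℂ) * d := Function.update_self n _ xstar
  have hxtm : ∀ m, m ≠ n → xt m = xstar m := fun m hm => Function.update_of_ne hm _ xstar
  have hfeas : xt ∈ feasA K N := by
    constructor
    · rw [hxtm 0 (Ne.symm hn)]; exact hxA.1
    · intro m hm
      by_cases hmn : m = n
      · subst hmn
        rw [hxtn]
        refine interior_subset (hball ?_)
        rw [Metric.mem_ball, Complex.dist_eq]
        have : z + (t : ℂ) * d - z = (t : ℂ) * d := by ring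
        rw [this, norm_mul, hd1, mul_one, Complex.norm_real, Real.norm_eq_abs, _root_.abs_of_pos ht0]
        exact htδ
      · rw [hxtm m hmn]; exact hxA.2 m hm
  have hn2 : norm2 (xt - xstar) = t := by
    unfold norm2
    rw [Finset.sum_eq_single n]
    · rw [Pi.sub_apply, hxtn]
      have : z + (t : ℂ) * d - xstar n = (t : ℂ) * d := by rw [← hz_def]; ring
      rw [this, norm_mul, hd1, mul_one, Complex.norm_real, Real.norm_eq_abs, _root_.abs_of_pos ht0,
        Real.sqrt_sq ht0.le]
    · intro m _ hm
      rw [Pi.sub_apply, hxtm m hm, sub_self, norm_zero]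
      norm_num
    · intro h; exact absurd (Finset.mem_univ n) h
  have hn1 : norm1 xt = norm1 xstar + t := by
    unfold norm1
    have hterm : ∀ m, ‖xt m‖ = ‖xstar m‖ + (if m = n then t else 0) := by
      intro m
      by_cases hmn : m = n
      · subst hmn
        rw [hxtn, habs, if_pos rfl, ← hz_def]
      · rw [hxtm m hmn, if_neg hmn, add_zero]
    calc ∑ m, ‖xt m‖
        = ∑ m, (‖xstar m‖ + (if m = n then t else 0)) :=
          Finset.sum_congr rfl fun m _ => hterm m
      _ = (∑ m, ‖xstar m‖) + ∑ m, (if m = n then t else 0) :=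
          Finset.sum_add_distrib
      _ = (∑ m, ‖xstar m‖) + t := by
          rw [Finset.sum_ite_eq' Finset.univ n (fun _ => t)]
          simp
  haveI hne : Nonempty (Fin U) := ⟨⟨0, hU⟩⟩
  set L : ℝ := ⨆ u, Lconst C σ u with hL_def
  have hmin : minObj C σ xstar - L * t ≤ minObj C σ xt := by
    refine le_ciInf fun u => ?_
    have hlip := my_fObj_lip C a hC σ hσ u xstar xt (my_feas_norm2_le hxA) (my_feas_norm2_le hfeas)
    have hswap : norm2 (xstar - xt) = t := by rw [my_norm2_sub_comm, hn2]
    rw [hswap] at hlip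
    have h2 : minObj C σ xstar ≤ fObj C σ u xstar :=
      ciInf_le (Set.Finite.bddBelow (Set.finite_range _)) u
    have h3 : Lconst C σ u ≤ L := le_ciSup (Set.Finite.bddAbove (Set.finite_range _)) u
    have h4 : Lconst C σ u * t ≤ L * t := mul_le_mul_of_nonneg_right h3 ht0.le
    linarith
  have hle := hloc xt hfeas (by rw [hn2]; exact htε)
  unfold f0 at hle
  rw [hn1] at hle
  have hprod : L * t < lam * t := mul_lt_mul_of_pos_right hlam ht0
  linarith
end
end

section
/- For every u ∈ {1,…,U} and all vectors x₁, x₂ ∈ ℂ^{N+1} each of whose N+1 entries lies in conv(𝒳), one has f_u(x₁) − f_u(x₂) ≥ −L_u·‖x₁ − x₂‖₂; that is, f_u is Lipschitz continuous on the set of vectors with entries in conv(𝒳) with Lipschitz constant L_u. -/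
open Complex Finset

noncomputable section

/-! ### Auxiliary lemmas -/

lemma hull_abs_le {K : ℕ} {z : ℂ} (hz : z ∈ hullSet K) : ‖z‖ ≤ 1 := by
  have h : hullSet K ⊆ Metric.closedBall (0:ℂ) 1 := by
    apply convexHull_min _ (convex_closedBall (0:ℂ) 1)
    rintro w ⟨k, hk, rfl⟩
    rw [Metric.mem_closedBall, Complex.dist_eq, sub_zero, Complex.norm_exp_ofReal_mul_I]
  simpa [Metric.mem_closedBall, Complex.dist_eq] using h hz

lemma sumsq_le {N : ℕ} {x : Fin (N+1) → ℂ} (h : ∀ n, ‖x n‖ ≤ 1) :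
    ∑ n, ‖x n‖^2 ≤ (N:ℝ) + 1 := by
  calc ∑ n, ‖x n‖^2 ≤ ∑ _n : Fin (N+1), (1:ℝ) := by
        apply Finset.sum_le_sum; intro n _
        have h1 := h n; have h0 := norm_nonneg (x n); nlinarith
    _ = (N:ℝ)+1 := by simp

lemma bilin_abs_le {N : ℕ} (M : Matrix (Fin (N+1)) (Fin (N+1)) ℂ) (v w : Fin (N+1) → ℂ) :
    |(dotProduct (star v) (M.mulVec w)).re| ≤
      frobNorm M * Real.sqrt (∑ n, ‖v n‖^2) * Real.sqrt (∑ n, ‖w n‖^2) := by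
  have h1 : |(dotProduct (star v) (M.mulVec w)).re| ≤
      ‖dotProduct (star v) (M.mulVec w)‖ := Complex.abs_re_le_norm _
  have hrw : dotProduct (star v) (M.mulVec w)
      = ∑ p : Fin (N+1) × Fin (N+1), starRingEnd ℂ (v p.1) * M p.1 p.2 * w p.2 := by
    rw [Fintype.sum_prod_type]
    simp [dotProduct, Matrix.mulVec, Finset.mul_sum, mul_assoc]
  have h2 : ‖dotProduct (star v) (M.mulVec w)‖ ≤
      ∑ p : Fin (N+1) × Fin (N+1), ‖M p.1 p.2‖ * (‖v p.1‖ * ‖w p.2‖) := by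
    rw [hrw]
    refine (norm_sum_le _ _).trans (le_of_eq (Finset.sum_congr rfl fun p _ => ?_))
    simp [map_mul]
    ring
  have cs := Real.sum_mul_le_sqrt_mul_sqrt Finset.univ
      (fun p : Fin (N+1) × Fin (N+1) => ‖M p.1 p.2‖)
      (fun p => ‖v p.1‖ * ‖w p.2‖)
  have hfrob : Real.sqrt (∑ p : Fin (N+1) × Fin (N+1), ‖M p.1 p.2‖^2) = frobNorm M := by
    rw [Fintype.sum_prod_type]; rfl
  have hvw2 : ∑ p : Fin (N+1) × Fin (N+1), (‖v p.1‖ * ‖w p.2‖)^2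
      = (∑ n, ‖v n‖^2) * (∑ n, ‖w n‖^2) := by
    rw [Finset.sum_mul_sum, Fintype.sum_prod_type]
    exact Finset.sum_congr rfl fun i _ => Finset.sum_congr rfl fun j _ => by ring
  have hvw : Real.sqrt (∑ p : Fin (N+1) × Fin (N+1), (‖v p.1‖ * ‖w p.2‖)^2)
      = Real.sqrt (∑ n, ‖v n‖^2) * Real.sqrt (∑ n, ‖w n‖^2) := by
    rw [hvw2]
    exact Real.sqrt_mul (Finset.sum_nonneg fun i _ => sq_nonneg _) _
  rw [hfrob, hvw] at cs
  calc |(dotProduct (star v) (M.mulVec w)).re|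
      ≤ _ := h1
    _ ≤ _ := h2
    _ ≤ frobNorm M * (Real.sqrt (∑ n, ‖v n‖^2) * Real.sqrt (∑ n, ‖w n‖^2)) := cs
    _ = _ := by ring

lemma quad_rank1_nonneg {N : ℕ} (a x : Fin (N+1) → ℂ) :
    0 ≤ quadForm (Matrix.vecMulVec a (star a)) x := by
  unfold quadForm
  have : dotProduct (star x) ((Matrix.vecMulVec a (star a)).mulVec x)
      = starRingEnd ℂ (dotProduct (star a) x) * (dotProduct (star a) x) := by
    simp only [Matrix.mulVec, dotProduct, Matrix.vecMulVec_apply, Pi.star_apply,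
      map_sum, map_mul, Finset.mul_sum, Finset.sum_mul]
    rw [Finset.sum_comm]
    refine Finset.sum_congr rfl fun i _ => Finset.sum_congr rfl fun j _ => ?_
    simp [RingHom.id_apply]
    ring
  rw [this, mul_comm, Complex.mul_conj]
  simp [Complex.normSq_nonneg]

lemma quad_add {N : ℕ} (A B : Matrix (Fin (N+1)) (Fin (N+1)) ℂ) (x : Fin (N+1) → ℂ) :
    quadForm (A + B) x = quadForm A x + quadForm B x := by
  simp [quadForm, Matrix.add_mulVec, dotProduct_add]

lemma quad_sum {N : ℕ} {ι : Type*} (s : Finset ι) (M : ι → Matrix (Fin (N+1)) (Fin (N+1)) ℂ)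
    (x : Fin (N+1) → ℂ) :
    quadForm (∑ i ∈ s, M i) x = ∑ i ∈ s, quadForm (M i) x := by
  classical
  induction s using Finset.induction with
  | empty => simp [quadForm]
  | insert _ _ h ih => rw [Finset.sum_insert h, Finset.sum_insert h, quad_add, ih]

lemma quad_diff {N : ℕ} (M : Matrix (Fin (N+1)) (Fin (N+1)) ℂ) (x y : Fin (N+1) → ℂ) :
    quadForm M x - quadForm M y
      = (dotProduct (star x) (M.mulVec (x - y))).re
        + (dotProduct (star (x - y)) (M.mulVec y)).re := by
  unfold quadForm
  rw [← Complex.sub_re, ← Complex.add_re]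
  congr 1
  simp only [Matrix.mulVec_sub, dotProduct_sub, star_sub, sub_dotProduct]
  ring

lemma quad_diff_le {N : ℕ} (M : Matrix (Fin (N+1)) (Fin (N+1)) ℂ) (x y : Fin (N+1) → ℂ)
    (hx : ∑ n, ‖x n‖^2 ≤ (N:ℝ)+1) (hy : ∑ n, ‖y n‖^2 ≤ (N:ℝ)+1) :
    |quadForm M x - quadForm M y| ≤ 2 * Real.sqrt ((N:ℝ)+1) * frobNorm M * norm2 (x - y) := by
  have hMnn : 0 ≤ frobNorm M := Real.sqrt_nonneg _
  have hΔnn : 0 ≤ norm2 (x - y) := Real.sqrt_nonneg _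
  have hx' : Real.sqrt (∑ n, ‖x n‖^2) ≤ Real.sqrt ((N:ℝ)+1) := Real.sqrt_le_sqrt hx
  have hy' : Real.sqrt (∑ n, ‖y n‖^2) ≤ Real.sqrt ((N:ℝ)+1) := Real.sqrt_le_sqrt hy
  have hxnn : 0 ≤ Real.sqrt (∑ n, ‖x n‖^2) := Real.sqrt_nonneg _
  have hynn : 0 ≤ Real.sqrt (∑ n, ‖y n‖^2) := Real.sqrt_nonneg _
  have hd : Real.sqrt (∑ n, ‖(x - y) n‖^2) = norm2 (x - y) := rfl
  have b1 := bilin_abs_le M x (x - y)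
  have b2 := bilin_abs_le M (x - y) y
  rw [hd] at b1 b2
  have hb1 : |(dotProduct (star x) (M.mulVec (x - y))).re|
      ≤ frobNorm M * Real.sqrt ((N:ℝ)+1) * norm2 (x - y) := by
    refine b1.trans ?_
    gcongr
  have hb2 : |(dotProduct (star (x - y)) (M.mulVec y)).re|
      ≤ frobNorm M * norm2 (x - y) * Real.sqrt ((N:ℝ)+1) := by
    refine b2.trans ?_
    gcongr
  rw [quad_diff]
  calc |(dotProduct (star x) (M.mulVec (x - y))).re
        + (dotProduct (star (x - y)) (M.mulVec y)).re|
      ≤ |(dotProduct (star x) (M.mulVec (x - y))).re|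
        + |(dotProduct (star (x - y)) (M.mulVec y)).re| := abs_add_le _ _
    _ ≤ frobNorm M * Real.sqrt ((N:ℝ)+1) * norm2 (x - y)
        + frobNorm M * norm2 (x - y) * Real.sqrt ((N:ℝ)+1) := add_le_add hb1 hb2
    _ = 2 * Real.sqrt ((N:ℝ)+1) * frobNorm M * norm2 (x - y) := by ring

lemma quad_abs_le {N : ℕ} (M : Matrix (Fin (N+1)) (Fin (N+1)) ℂ) (x : Fin (N+1) → ℂ)
    (hx : ∑ n, ‖x n‖^2 ≤ (N:ℝ)+1) :
    |quadForm M x| ≤ ((N:ℝ)+1) * frobNorm M := by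
  have snn : 0 ≤ ∑ n, ‖x n‖^2 := Finset.sum_nonneg fun _ _ => sq_nonneg _
  have hMnn : 0 ≤ frobNorm M := Real.sqrt_nonneg _
  have b := bilin_abs_le M x x
  have h2 : frobNorm M * Real.sqrt (∑ n, ‖x n‖^2) * Real.sqrt (∑ n, ‖x n‖^2)
      = frobNorm M * (∑ n, ‖x n‖^2) := by
    rw [mul_assoc, Real.mul_self_sqrt snn]
  unfold quadForm
  calc |(dotProduct (star x) (Matrix.mulVec M x)).re|
      ≤ frobNorm M * (∑ n, ‖x n‖^2) := b.trans_eq h2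
    _ ≤ frobNorm M * ((N:ℝ)+1) := by gcongr
    _ = ((N:ℝ)+1) * frobNorm M := mul_comm _ _

set_option maxHeartbeats 800000 in
theorem stmt4
    (K N U : ℕ) (hK : 2 ≤ K) (hN : 1 ≤ N) (hU : 1 ≤ U)
    (a : Fin U → Fin U → (Fin (N + 1) → ℂ))
    (C : Fin U → Fin U → Matrix (Fin (N + 1)) (Fin (N + 1)) ℂ)
    (hC : ∀ u u' : Fin U, C u u' = Matrix.vecMulVec (a u u') (star (a u u')))
    (σ : Fin U → ℝ) (hσ : ∀ u, 0 < σ u)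
    (u : Fin U) (x₁ x₂ : Fin (N + 1) → ℂ)
    (hx₁ : ∀ n, x₁ n ∈ hullSet K) (hx₂ : ∀ n, x₂ n ∈ hullSet K) :
    fObj C σ u x₁ - fObj C σ u x₂ ≥ -(Lconst C σ u) * norm2 (x₁ - x₂) := by
  classical
  have hσ2 : (0:ℝ) < σ u ^ 2 := pow_pos (hσ u) 2
  have hs1 : ∑ n, ‖x₁ n‖^2 ≤ (N:ℝ)+1 := sumsq_le fun n => hull_abs_le (hx₁ n)
  have hs2 : ∑ n, ‖x₂ n‖^2 ≤ (N:ℝ)+1 := sumsq_le fun n => hull_abs_le (hx₂ n)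
  set R := Real.sqrt ((N:ℝ)+1) with hRdef
  have hRnn : (0:ℝ) ≤ R := Real.sqrt_nonneg _
  set F := frobNorm (C u u) with hFdef
  have hFnn : (0:ℝ) ≤ F := Real.sqrt_nonneg _
  set S := ∑ u' ∈ Finset.univ.erase u, C u u' with hSdef
  set G := frobNorm S with hGdef
  have hGnn : (0:ℝ) ≤ G := Real.sqrt_nonneg _
  set Δ := norm2 (x₁ - x₂) with hΔdef
  have hΔnn : (0:ℝ) ≤ Δ := Real.sqrt_nonneg _
  -- quadratic forms are nonnegative
  have hqnn : ∀ (u' : Fin U) (x : Fin (N+1) → ℂ), 0 ≤ quadForm (C u u') x := by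
    intro u' x; rw [hC]; exact quad_rank1_nonneg _ _
  set q₁ := quadForm (C u u) x₁ with hq₁def
  set q₂ := quadForm (C u u) x₂ with hq₂def
  set D₁ := (∑ u' ∈ Finset.univ.erase u, quadForm (C u u') x₁) + σ u ^ 2 with hD₁def
  set D₂ := (∑ u' ∈ Finset.univ.erase u, quadForm (C u u') x₂) + σ u ^ 2 with hD₂def
  have hD1ge : σ u ^ 2 ≤ D₁ :=
    le_add_of_nonneg_left (Finset.sum_nonneg fun u' _ => hqnn u' x₁)
  have hD2ge : σ u ^ 2 ≤ D₂ :=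
    le_add_of_nonneg_left (Finset.sum_nonneg fun u' _ => hqnn u' x₂)
  have hD1pos : 0 < D₁ := lt_of_lt_of_le hσ2 hD1ge
  have hD2pos : 0 < D₂ := lt_of_lt_of_le hσ2 hD2ge
  have hq2nn : 0 ≤ q₂ := hqnn u x₂
  have hq2le : q₂ ≤ ((N:ℝ)+1) * F := (le_abs_self _).trans (quad_abs_le _ _ hs2)
  have hqd : |q₁ - q₂| ≤ 2 * R * F * Δ := quad_diff_le _ _ _ hs1 hs2
  -- denominator difference
  have hDsub : D₂ - D₁ = quadForm S x₂ - quadForm S x₁ := by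
    rw [hD₁def, hD₂def, hSdef, quad_sum, quad_sum]; ring
  have hnormsymm : norm2 (x₂ - x₁) = Δ := by
    rw [hΔdef]; unfold norm2
    congr 1
    exact Finset.sum_congr rfl fun n _ => by
      rw [Pi.sub_apply, Pi.sub_apply, norm_sub_rev]
  have hDd : |D₂ - D₁| ≤ 2 * R * G * Δ := by
    rw [hDsub]
    have := quad_diff_le S x₂ x₁ hs2 hs1
    rwa [hnormsymm] at this
  -- rewrite the objectives
  have hgoal : fObj C σ u x₁ - fObj C σ u x₂ = q₁ / D₁ - q₂ / D₂ := rfl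
  have hLrw : Lconst C σ u = 2 * R * F / σ u ^ 2 * (1 + ((N:ℝ)+1) * G / σ u ^ 2) := rfl
  have hD1ne : D₁ ≠ 0 := hD1pos.ne'
  have hD2ne : D₂ ≠ 0 := hD2pos.ne'
  have hσne : σ u ^ 2 ≠ 0 := hσ2.ne'
  have hsplit : q₁ / D₁ - q₂ / D₂ = (q₁ - q₂) / D₁ + q₂ * (D₂ - D₁) / (D₁ * D₂) := by
    field_simp
    ring
  -- term 1
  have hTnn : (0:ℝ) ≤ 2 * R * F * Δ :=
    mul_nonneg (mul_nonneg (mul_nonneg (by norm_num) hRnn) hFnn) hΔnn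
  have hT1 : -(2 * R * F * Δ) / σ u ^ 2 ≤ (q₁ - q₂) / D₁ := by
    have h1 : -(2 * R * F * Δ) ≤ q₁ - q₂ := neg_le_of_abs_le hqd
    calc -(2 * R * F * Δ) / σ u ^ 2 ≤ -(2 * R * F * Δ) / D₁ := by
          rw [div_le_div_iff₀ hσ2 hD1pos, neg_mul, neg_mul]
          exact neg_le_neg (mul_le_mul_of_nonneg_left hD1ge hTnn)
      _ ≤ (q₁ - q₂) / D₁ := (div_le_div_iff_of_pos_right hD1pos).mpr h1
  -- term 2
  have hnum : -(((N:ℝ)+1) * F * (2 * R * G * Δ)) ≤ q₂ * (D₂ - D₁) := by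
    have habs : |q₂ * (D₂ - D₁)| ≤ ((N:ℝ)+1) * F * (2 * R * G * Δ) := by
      rw [abs_mul, _root_.abs_of_nonneg hq2nn]
      exact mul_le_mul hq2le hDd (abs_nonneg _)
        (mul_nonneg (by positivity) hFnn)
    linarith [neg_abs_le (q₂ * (D₂ - D₁))]
  have hT2 : -(((N:ℝ)+1) * F * (2 * R * G * Δ)) / (σ u ^ 2 * σ u ^ 2)
      ≤ q₂ * (D₂ - D₁) / (D₁ * D₂) := by
    have hY : (0:ℝ) ≤ ((N:ℝ)+1) * F * (2 * R * G * Δ) :=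
      mul_nonneg (mul_nonneg (by positivity) hFnn)
        (mul_nonneg (mul_nonneg (mul_nonneg (by norm_num) hRnn) hGnn) hΔnn)
    have hDD : σ u ^ 2 * σ u ^ 2 ≤ D₁ * D₂ := mul_le_mul hD1ge hD2ge hσ2.le hD1pos.le
    have hDDpos : 0 < D₁ * D₂ := mul_pos hD1pos hD2pos
    calc -(((N:ℝ)+1) * F * (2 * R * G * Δ)) / (σ u ^ 2 * σ u ^ 2)
        ≤ -(((N:ℝ)+1) * F * (2 * R * G * Δ)) / (D₁ * D₂) := by
          rw [div_le_div_iff₀ (mul_pos hσ2 hσ2) hDDpos, neg_mul, neg_mul]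
          exact neg_le_neg (mul_le_mul_of_nonneg_left hDD hY)
      _ ≤ q₂ * (D₂ - D₁) / (D₁ * D₂) := (div_le_div_iff_of_pos_right hDDpos).mpr hnum
  -- combine
  have hLsum : -(2 * R * F / σ u ^ 2 * (1 + ((N:ℝ)+1) * G / σ u ^ 2)) * Δ
      = -(2 * R * F * Δ) / σ u ^ 2
        + -(((N:ℝ)+1) * F * (2 * R * G * Δ)) / (σ u ^ 2 * σ u ^ 2) := by
    ring
  rw [ge_iff_le, hgoal, hLrw, hsplit, hLsum]
  exact add_le_add hT1 hT2
end
end
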